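/- Let N ≥ 3, let α ∈ (0, 2π), κ = π/α, and z ∈ ℝ^{N−2}. Write points of ℝ^N as x = (x₁, x₂, x″) with x″ ∈ ℝ^{N−2}, and let (ρ, θ) denote polar coordinates of (x₁, x₂), so the 2-dihedron of opening α is D_α = {x ∈ ℝ^N : ρ > 0, 0 < θ < α}, with edge d = {x₁ = x₂ = 0}. Then the function K(x) = ρ^κ sin(κθ) · (ρ² + |x″ − z|²)^{−(N−2+2κ)/2} is positive and harmonic in D_α, and it extends continuously by the value 0 to ∂D_α ∖ {(0,0,z)}. (Explicit form (6.19) of the Martin kernel of a 2-dihedron with pole at the edge point z, Section 6.2 with k = 2, κ₊ = π/α.) -/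

import Mathlib

open Filter

/-- The polar angle of `(x₁, x₂) ∈ ℝ² ∖ {0}`, normalized to lie in `[0, 2π)`. -/
noncomputable def theta (x₁ x₂ : ℝ) : ℝ :=
  if Complex.arg ((x₁ : ℂ) + x₂ * Complex.I) < 0 then
    Complex.arg ((x₁ : ℂ) + x₂ * Complex.I) + 2 * Real.pi
  else Complex.arg ((x₁ : ℂ) + x₂ * Complex.I)

/-- The 2-dihedron of opening `α`: `D_α = {ρ > 0, 0 < θ < α}` in
`ℝ^N = ℝ × ℝ × ℝ^{N-2}` with polar coordinates `(ρ, θ)` in the first two variables. -/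
def Dset (N : ℕ) (α : ℝ) : Set (ℝ × ℝ × EuclideanSpace ℝ (Fin (N - 2))) :=
  {x | 0 < Real.sqrt (x.1 ^ 2 + x.2.1 ^ 2) ∧
    0 < theta x.1 x.2.1 ∧ theta x.1 x.2.1 < α}

/-- The Laplacian on `ℝ × ℝ × ℝ^{N-2}`, as the sum of second derivatives in the
coordinate directions. -/
noncomputable def lapX (N : ℕ) (f : ℝ × ℝ × EuclideanSpace ℝ (Fin (N - 2)) → ℝ)
    (x : ℝ × ℝ × EuclideanSpace ℝ (Fin (N - 2))) : ℝ :=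
  fderiv ℝ (fun y => fderiv ℝ f y (1, 0, 0)) x (1, 0, 0) +
    fderiv ℝ (fun y => fderiv ℝ f y (0, 1, 0)) x (0, 1, 0) +
    ∑ i : Fin (N - 2),
      fderiv ℝ (fun y => fderiv ℝ f y (0, 0, EuclideanSpace.single i 1)) x
        (0, 0, EuclideanSpace.single i 1)

/-- The Martin kernel of the 2-dihedron with pole at the edge point `z`:
`K(x) = ρ^κ sin(κθ) (ρ² + |x″ - z|²)^{-(N-2+2κ)/2}`. -/
noncomputable def Kfun (N : ℕ) (κ : ℝ) (z : EuclideanSpace ℝ (Fin (N - 2)))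
    (x : ℝ × ℝ × EuclideanSpace ℝ (Fin (N - 2))) : ℝ :=
  Real.sqrt (x.1 ^ 2 + x.2.1 ^ 2) ^ κ * Real.sin (κ * theta x.1 x.2.1) *
    (x.1 ^ 2 + x.2.1 ^ 2 + ‖x.2.2 - z‖ ^ 2) ^ (-((N : ℝ) - 2 + 2 * κ) / 2)

/-! ### Auxiliary definitions and lemmas -/

open Complex in
/-- `theta` as a function on `ℂ`. -/
noncomputable def thetaW (w : ℂ) : ℝ := theta w.re w.im

section ThetaLemmas
open Complex

lemma thetaW_eq (a b : ℝ) : theta a b = thetaW ((a : ℂ) + b * I) := by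
  simp [thetaW, theta]

lemma thetaW_def (w : ℂ) :
    thetaW w = if arg w < 0 then arg w + 2 * Real.pi else arg w := by
  simp [thetaW, theta, Complex.re_add_im]

lemma thetaW_nonneg (w : ℂ) : 0 ≤ thetaW w := by
  rw [thetaW_def]
  split_ifs with h
  · nlinarith [Complex.neg_pi_lt_arg w, Real.pi_pos]
  · linarith [not_lt.mp h]

lemma thetaW_lt_two_pi (w : ℂ) : thetaW w < 2 * Real.pi := by
  rw [thetaW_def]
  split_ifs with h
  · linarith
  · nlinarith [Complex.arg_le_pi w, Real.pi_pos]

lemma thetaW_eq_pi_add_arg_neg {w : ℂ} (h : w.re < 0 ∨ w.im ≠ 0) :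
    thetaW w = Real.pi + Complex.arg (-w) := by
  rw [thetaW_def]
  rcases lt_trichotomy w.im 0 with him | him | him
  · rw [if_pos (Complex.arg_neg_iff.mpr him), Complex.arg_neg_eq_arg_add_pi_of_im_neg him]
    ring
  · have hre : w.re < 0 := h.resolve_right (by simp [him])
    rw [if_neg (by rw [Complex.arg_eq_pi_iff.mpr ⟨hre, him⟩, not_lt]; exact Real.pi_pos.le),
      Complex.arg_eq_pi_iff.mpr ⟨hre, him⟩,
      Complex.arg_eq_zero_iff.mpr ⟨by simp [hre.le], by simp [him]⟩]
    ring
  · rw [if_neg (by rw [not_lt]; exact Complex.arg_nonneg_iff.mpr him.le),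
      Complex.arg_neg_eq_arg_sub_pi_of_im_pos him]
    ring

lemma isOpen_Wset : IsOpen {w : ℂ | w.re < 0 ∨ w.im ≠ 0} :=
  (isOpen_lt Complex.continuous_re continuous_const).union
    (isOpen_ne_fun Complex.continuous_im continuous_const)

lemma Wset_ne_zero {w : ℂ} (h : w.re < 0 ∨ w.im ≠ 0) : w ≠ 0 := by
  rintro rfl; simp at h

lemma continuousAt_thetaW {w : ℂ} (h : w.re < 0 ∨ w.im ≠ 0) : ContinuousAt thetaW w := by
  have h1 : ContinuousAt (fun w : ℂ => Real.pi + Complex.arg (-w)) w := by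
    have : ContinuousAt Complex.arg (-w) :=
      Complex.continuousAt_arg (by simpa [Complex.slitPlane] using h)
    exact continuousAt_const.add (this.comp continuousAt_neg)
  refine h1.congr ?_
  filter_upwards [isOpen_Wset.mem_nhds h] with v hv
  exact (thetaW_eq_pi_add_arg_neg hv).symm

lemma mem_Wset_of_thetaW {w : ℂ} (h0 : 0 < thetaW w) (h2 : thetaW w < 2 * Real.pi) :
    w.re < 0 ∨ w.im ≠ 0 := by
  by_contra hc
  push_neg at hc
  have : Complex.arg w = 0 :=
    Complex.arg_eq_zero_iff.mpr ⟨le_of_not_gt (by simpa using hc.1), hc.2⟩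
  rw [thetaW_def, this] at h0
  simp at h0

lemma thetaW_pos_of_Wset {w : ℂ} (h : w.re < 0 ∨ w.im ≠ 0) : 0 < thetaW w := by
  rcases (thetaW_nonneg w).lt_or_eq with h0 | h0
  · exact h0
  · exfalso
    rw [thetaW_def] at h0
    split_ifs at h0 with harg
    · nlinarith [Complex.neg_pi_lt_arg w, Real.pi_pos]
    · have : Complex.arg w = 0 := h0.symm
      rw [Complex.arg_eq_zero_iff] at this
      rcases h with h | h
      · linarith [this.1]
      · exact h this.2

end ThetaLemmas

section ChartLemmas
open Complex

lemma rot_arg_abs {w : ℂ} (hw : w ≠ 0) {θ₀ : ℝ} (hd : |thetaW w - θ₀| < Real.pi) :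
    Complex.arg (Complex.exp (-(θ₀ : ℂ) * I) * w) = thetaW w - θ₀ ∧
      ‖Complex.exp (-(θ₀ : ℂ) * I) * w‖ = ‖w‖ := by
  have habs : ‖Complex.exp (-(θ₀ : ℂ) * I) * w‖ = ‖w‖ := by
    rw [norm_mul]
    rw [show (-(θ₀ : ℂ) * I) = ((-θ₀ : ℝ) : ℂ) * I by push_cast; ring,
      Complex.norm_exp_ofReal_mul_I, one_mul]
  refine ⟨?_, habs⟩
  have hρ : 0 < ‖w‖ := norm_pos_iff.mpr hw
  have hw' : w = (‖w‖ : ℂ) * Complex.exp ((thetaW w : ℂ) * I) := by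
    rw [thetaW_def]
    split_ifs with h
    · push_cast
      rw [add_mul, Complex.exp_add]
      rw [show ((2 : ℂ) * (Real.pi : ℂ)) * I = (2 : ℂ) * (Real.pi : ℂ) * I by ring]
      rw [show Complex.exp ((2 : ℂ) * (Real.pi : ℂ) * I) = 1 from by
        simpa using Complex.exp_two_pi_mul_I]
      rw [mul_one, Complex.norm_mul_exp_arg_mul_I]
    · exact (Complex.norm_mul_exp_arg_mul_I w).symm
  have key : Complex.exp (-(θ₀ : ℂ) * I) * w
      = (‖w‖ : ℂ) *
        (Complex.cos ((thetaW w - θ₀ : ℝ) : ℂ) + Complex.sin ((thetaW w - θ₀ : ℝ) : ℂ) * I) := by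
    conv_lhs => rw [hw']
    rw [mul_left_comm, ← Complex.exp_add,
      show -(θ₀ : ℂ) * I + (thetaW w : ℂ) * I = ((thetaW w - θ₀ : ℝ) : ℂ) * I by push_cast; ring,
      Complex.exp_mul_I]
  rw [key, Complex.arg_mul_cos_add_sin_mul_I hρ
    ⟨by have := abs_lt.mp hd; linarith [this.1], by have := abs_lt.mp hd; linarith [this.2]⟩]

lemma im_rot_cpow (κ θ₀ : ℝ) {A : ℂ} (hA : A ≠ 0) :
    (Complex.exp ((θ₀ : ℂ) * κ * I) * A ^ (κ : ℂ)).im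
      = ‖A‖ ^ κ * Real.sin (κ * (θ₀ + arg A)) := by
  rw [Complex.cpow_def_of_ne_zero hA, ← Complex.exp_add, Complex.exp_im]
  have hre : ((θ₀ : ℂ) * κ * I + Complex.log A * κ).re = Real.log ‖A‖ * κ := by
    simp [Complex.log_re]
  have him : ((θ₀ : ℂ) * κ * I + Complex.log A * κ).im = θ₀ * κ + Complex.arg A * κ := by
    simp [Complex.log_im]
  rw [hre, him, ← Real.rpow_def_of_pos (norm_pos_iff.mpr hA),
    show θ₀ * κ + Complex.arg A * κ = κ * (θ₀ + Complex.arg A) by ring]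

end ChartLemmas

section XspLemmas
open Complex

variable {m : ℕ}

/-- abbreviation for the ambient space -/
abbrev Xsp (m : ℕ) := ℝ × ℝ × EuclideanSpace ℝ (Fin m)

noncomputable def Jf (y : Xsp m) : ℂ := (y.1 : ℂ) + y.2.1 * I

noncomputable def JD (m : ℕ) : Xsp m →L[ℝ] ℂ :=
  Complex.ofRealCLM.comp (ContinuousLinearMap.fst ℝ ℝ (ℝ × EuclideanSpace ℝ (Fin m))) +
  (((ContinuousLinearMap.fst ℝ ℝ (EuclideanSpace ℝ (Fin m))).comp
     (ContinuousLinearMap.snd ℝ ℝ (ℝ × EuclideanSpace ℝ (Fin m)))).smulRight I)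

lemma JD_apply (h : Xsp m) : JD m h = (h.1 : ℂ) + h.2.1 * I := by
  simp [JD, Complex.real_smul]

lemma hasFDerivAt_Jf (y : Xsp m) : HasFDerivAt (fun y : Xsp m => Jf y) (JD m) y := by
  have : (fun y : Xsp m => Jf y) = ⇑(JD m) := by
    funext h; rw [JD_apply]; rfl
  rw [this]
  exact (JD m).hasFDerivAt

noncomputable def tf (z : EuclideanSpace ℝ (Fin m)) (y : Xsp m) : ℝ :=
  y.1 ^ 2 + y.2.1 ^ 2 + ‖y.2.2 - z‖ ^ 2

noncomputable def tD (z : EuclideanSpace ℝ (Fin m)) (y : Xsp m) :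
    Xsp m →L[ℝ] ℝ :=
  (2 * y.1) • ContinuousLinearMap.fst ℝ ℝ (ℝ × EuclideanSpace ℝ (Fin m)) +
  (2 * y.2.1) • ((ContinuousLinearMap.fst ℝ ℝ (EuclideanSpace ℝ (Fin m))).comp
     (ContinuousLinearMap.snd ℝ ℝ (ℝ × EuclideanSpace ℝ (Fin m)))) +
  2 • ((innerSL ℝ (y.2.2 - z)).comp
    ((ContinuousLinearMap.snd ℝ ℝ (EuclideanSpace ℝ (Fin m))).comp
     (ContinuousLinearMap.snd ℝ ℝ (ℝ × EuclideanSpace ℝ (Fin m)))))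

lemma tD_apply (z : EuclideanSpace ℝ (Fin m)) (y h : Xsp m) :
    tD z y h = 2 * y.1 * h.1 + 2 * y.2.1 * h.2.1 + 2 * inner ℝ (y.2.2 - z) h.2.2 := by
  simp [tD]
  rw [inner_sub_left]

lemma hasFDerivAt_tf (z : EuclideanSpace ℝ (Fin m)) (y : Xsp m) :
    HasFDerivAt (tf z) (tD z y) y := by
  have h1 : HasFDerivAt (fun y : Xsp m => y.1) (ContinuousLinearMap.fst ℝ ℝ _) y :=
    hasFDerivAt_fst
  have h2 : HasFDerivAt (fun y : Xsp m => y.2.1)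
      ((ContinuousLinearMap.fst ℝ ℝ (EuclideanSpace ℝ (Fin m))).comp
        (ContinuousLinearMap.snd ℝ ℝ (ℝ × EuclideanSpace ℝ (Fin m)))) y :=
    (hasFDerivAt_fst (p := y.2)).comp y (hasFDerivAt_snd (p := y))
  have h3 : HasFDerivAt (fun y : Xsp m => y.2.2 - z)
      (((ContinuousLinearMap.snd ℝ ℝ (EuclideanSpace ℝ (Fin m))).comp
        (ContinuousLinearMap.snd ℝ ℝ (ℝ × EuclideanSpace ℝ (Fin m))))) y :=
    ((hasFDerivAt_snd (p := y.2)).comp y (hasFDerivAt_snd (p := y))).sub_const z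
  have h4 := h3.norm_sq
  have H := ((h1.mul h1).add (h2.mul h2)).add h4
  have hfun : ((((fun y : Xsp m => y.1) * fun y => y.1) + (fun y : Xsp m => y.2.1) * fun y => y.2.1)
      + fun x : Xsp m => ‖x.2.2 - z‖ ^ 2) = tf z := by
    funext v; simp [tf]; ring
  rw [hfun] at H
  refine H.congr_fderiv ?_
  refine ContinuousLinearMap.ext fun h => ?_
  rw [tD_apply]
  simp
  rw [inner_sub_left]
  ring

/-- Master lemma: derivative of `c (a·w)^e q^r ℓ`. -/
lemma master (c e a : ℂ) (r : ℝ) (z : EuclideanSpace ℝ (Fin m))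
    (ℓ : Xsp m → ℝ) (ℓD : Xsp m →L[ℝ] ℝ) (y : Xsp m)
    (hsl : a * Jf y ∈ Complex.slitPlane) (hq : tf z y ≠ 0)
    (hℓ : HasFDerivAt ℓ ℓD y) :
    HasFDerivAt
      (fun v => c * (a * Jf v) ^ e * ((tf z v ^ r : ℝ) : ℂ) * ((ℓ v : ℝ) : ℂ))
      ((c * e * a * (a * Jf y) ^ (e - 1) * ((tf z y ^ r : ℝ) : ℂ) * ((ℓ y : ℝ) : ℂ)) • (JD m)
        + (c * (a * Jf y) ^ e * ((r * tf z y ^ (r - 1) * ℓ y : ℝ) : ℂ)) •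
            (Complex.ofRealCLM.comp (tD z y))
        + (c * (a * Jf y) ^ e * ((tf z y ^ r : ℝ) : ℂ)) • (Complex.ofRealCLM.comp ℓD)) y := by
  have hJ : HasFDerivAt (fun v : Xsp m => a * Jf v) (a • JD m) y :=
    (hasFDerivAt_Jf y).const_mul a
  have hpow : HasFDerivAt (fun v : Xsp m => (a * Jf v) ^ e)
      ((e * (a * Jf y) ^ (e - 1)) • (a • JD m)) y :=
    by have := (Complex.hasStrictDerivAt_cpow_const (c := e) hsl).hasDerivAt.comp_hasFDerivAt y hJ; exact this
  have hc : HasFDerivAt (fun v : Xsp m => c * (a * Jf v) ^ e)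
      (c • ((e * (a * Jf y) ^ (e - 1)) • (a • JD m))) y := hpow.const_mul c
  have hrp : HasFDerivAt (fun v : Xsp m => tf z v ^ r)
      ((r * tf z y ^ (r - 1)) • tD z y) y :=
    (Real.hasDerivAt_rpow_const (p := r) (Or.inl hq)).comp_hasFDerivAt y (hasFDerivAt_tf z y)
  have hrpC : HasFDerivAt (fun v : Xsp m => ((tf z v ^ r : ℝ) : ℂ))
      (Complex.ofRealCLM.comp ((r * tf z y ^ (r - 1)) • tD z y)) y :=
    (Complex.ofRealCLM.hasFDerivAt).comp y hrp
  have hℓC : HasFDerivAt (fun v : Xsp m => ((ℓ v : ℝ) : ℂ))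
      (Complex.ofRealCLM.comp ℓD) y :=
    (Complex.ofRealCLM.hasFDerivAt).comp y hℓ
  have H := (hc.mul hrpC).mul hℓC
  refine H.congr_fderiv ?_
  refine ContinuousLinearMap.ext fun h => ?_
  simp [Complex.real_smul]
  ring

lemma Jf_eq_zero_iff (y : Xsp m) : Jf y = 0 ↔ y.1 = 0 ∧ y.2.1 = 0 := by
  simp [Jf, Complex.ext_iff]

lemma abs_Jf (y : Xsp m) : ‖Jf y‖ = Real.sqrt (y.1 ^ 2 + y.2.1 ^ 2) :=
  Complex.norm_add_mul_I _ _

lemma sq_add_sq_pos_of_Jf {y : Xsp m} (h : Jf y ≠ 0) : 0 < y.1 ^ 2 + y.2.1 ^ 2 := by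
  rcases (not_and_or.mp (h ∘ (Jf_eq_zero_iff y).mpr)) with h1 | h1 <;> positivity

lemma tf_pos_of_Jf {z : EuclideanSpace ℝ (Fin m)} {y : Xsp m} (h : Jf y ≠ 0) :
    0 < tf z y := by
  have := sq_add_sq_pos_of_Jf h
  have h2 : (0:ℝ) ≤ ‖y.2.2 - z‖ ^ 2 := by positivity
  rw [tf]; linarith

lemma continuous_Jf : Continuous (fun y : Xsp m => Jf y) := by
  unfold Jf; fun_prop

lemma continuous_tf (z : EuclideanSpace ℝ (Fin m)) : Continuous (tf z) := by
  unfold tf; fun_prop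

end XspLemmas

section DsetLemmas
open Complex

lemma mem_Dset_iff {N : ℕ} {α : ℝ} {y : Xsp (N - 2)} :
    y ∈ Dset N α ↔ Jf y ≠ 0 ∧ 0 < thetaW (Jf y) ∧ thetaW (Jf y) < α := by
  unfold Dset
  rw [Set.mem_setOf_eq, thetaW_eq y.1 y.2.1]
  constructor
  · rintro ⟨h1, h2, h3⟩
    refine ⟨?_, h2, h3⟩
    rw [Real.sqrt_pos] at h1
    rw [Ne, Jf_eq_zero_iff]
    rintro ⟨ha, hb⟩
    rw [ha, hb] at h1; norm_num at h1
  · rintro ⟨h1, h2, h3⟩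
    exact ⟨Real.sqrt_pos.mpr (sq_add_sq_pos_of_Jf h1), h2, h3⟩

lemma Dset_eq (N : ℕ) {α : ℝ} (hα2 : α < 2 * Real.pi) :
    Dset N α = (fun y : Xsp (N - 2) => Jf y) ⁻¹'
      ({w : ℂ | w.re < 0 ∨ w.im ≠ 0} ∩ thetaW ⁻¹' Set.Ioo 0 α) := by
  ext y
  rw [mem_Dset_iff]
  simp only [Set.mem_preimage, Set.mem_inter_iff, Set.mem_setOf_eq, Set.mem_Ioo]
  constructor
  · rintro ⟨h1, h2, h3⟩
    exact ⟨mem_Wset_of_thetaW h2 (h3.trans hα2), h2, h3⟩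
  · rintro ⟨h1, h2, h3⟩
    exact ⟨Wset_ne_zero h1, h2, h3⟩

lemma isOpen_Dset (N : ℕ) {α : ℝ} (hα2 : α < 2 * Real.pi) : IsOpen (Dset N α) := by
  rw [Dset_eq N hα2]
  refine (ContinuousOn.isOpen_inter_preimage ?_ isOpen_Wset isOpen_Ioo).preimage continuous_Jf
  exact fun w hw => (continuousAt_thetaW hw).continuousWithinAt

end DsetLemmas


section Harmonic
open Complex

lemma helper_norm_sq {m : ℕ} (v : EuclideanSpace ℝ (Fin m)) :
    ∑ i, (v i) ^ 2 = ‖v‖ ^ 2 := by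
  rw [EuclideanSpace.norm_eq, Real.sq_sqrt (by positivity)]
  exact Finset.sum_congr rfl fun i _ => by rw [Real.norm_eq_abs, _root_.sq_abs]

lemma hasFDerivAt_elli {m : ℕ} (z : EuclideanSpace ℝ (Fin m)) (i : Fin m) (y : Xsp m) :
    HasFDerivAt
      (fun y : Xsp m => (inner ℝ (y.2.2 - z) (EuclideanSpace.single i (1:ℝ)) : ℝ))
      ((innerSL ℝ (EuclideanSpace.single i (1:ℝ))).comp
        ((ContinuousLinearMap.snd ℝ ℝ (EuclideanSpace ℝ (Fin m))).comp
          (ContinuousLinearMap.snd ℝ ℝ (ℝ × EuclideanSpace ℝ (Fin m))))) y := by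
  have h3 : HasFDerivAt (fun y : Xsp m => y.2.2 - z)
      (((ContinuousLinearMap.snd ℝ ℝ (EuclideanSpace ℝ (Fin m))).comp
        (ContinuousLinearMap.snd ℝ ℝ (ℝ × EuclideanSpace ℝ (Fin m))))) y :=
    ((hasFDerivAt_snd (p := y.2)).comp y (hasFDerivAt_snd (p := y))).sub_const z
  have H := ((innerSL ℝ (EuclideanSpace.single i (1:ℝ))).hasFDerivAt).comp y h3
  refine H.congr_of_eventuallyEq (Eventually.of_forall fun v => ?_)
  simp [real_inner_comm]

lemma harmonicity (N : ℕ) (hN : 3 ≤ N) {α κ : ℝ} (hα2 : α < 2 * Real.pi)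
    (z : EuclideanSpace ℝ (Fin (N - 2))) (x : Xsp (N - 2)) (hx : x ∈ Dset N α) :
    lapX N (Kfun N κ z) x = 0 := by
  obtain ⟨hw0, hθ0, hθα⟩ := mem_Dset_iff.mp hx
  set θ₀ : ℝ := thetaW (Jf x) with hθ₀def
  have hθ2π : θ₀ < 2 * Real.pi := lt_trans hθα hα2
  set δ : ℝ := min θ₀ (2 * Real.pi - θ₀) / 2 with hδdef
  have hδ0 : 0 < δ := by
    have h1 : 0 < min θ₀ (2 * Real.pi - θ₀) := lt_min hθ0 (by linarith)
    positivity
  have hδπ : δ < Real.pi := by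
    rcases le_total θ₀ Real.pi with h | h
    · nlinarith [Real.pi_pos, min_le_left θ₀ (2 * Real.pi - θ₀)]
    · nlinarith [Real.pi_pos, min_le_right θ₀ (2 * Real.pi - θ₀)]
  set a : ℂ := Complex.exp (-(θ₀ : ℂ) * I) with hadef
  set c : ℂ := Complex.exp ((θ₀ : ℂ) * κ * I) with hcdef
  set p : ℝ := -((N : ℝ) - 2 + 2 * κ) / 2 with hpdef
  set Ω : Set (Xsp (N - 2)) := (fun y : Xsp (N - 2) => Jf y) ⁻¹'
      ({w : ℂ | w.re < 0 ∨ w.im ≠ 0} ∩ thetaW ⁻¹' Set.Ioo (θ₀ - δ) (θ₀ + δ)) with hΩdef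
  have hΩo : IsOpen Ω := by
    rw [hΩdef]
    refine (ContinuousOn.isOpen_inter_preimage ?_ isOpen_Wset isOpen_Ioo).preimage continuous_Jf
    exact fun w hw => (continuousAt_thetaW hw).continuousWithinAt
  have hxΩ : x ∈ Ω := by
    refine ⟨mem_Wset_of_thetaW hθ0 hθ2π, ?_⟩
    simp only [Set.mem_preimage, Set.mem_Ioo]
    constructor <;> [linarith; linarith]
  -- facts valid on Ω
  have hyfacts : ∀ y ∈ Ω, Jf y ≠ 0 ∧ a * Jf y ∈ Complex.slitPlane ∧ 0 < tf z y ∧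
      |thetaW (Jf y) - θ₀| < Real.pi := by
    intro y hy
    obtain ⟨hyW, hyI⟩ := hy
    have hJy : Jf y ≠ 0 := Wset_ne_zero hyW
    simp only [Set.mem_preimage, Set.mem_Ioo] at hyI
    have hd : |thetaW (Jf y) - θ₀| < Real.pi := by
      rw [abs_lt]
      obtain ⟨h1, h2⟩ := hyI
      constructor <;> nlinarith
    obtain ⟨harg, habs⟩ := rot_arg_abs hJy hd
    rw [← hadef] at harg
    have hAne : a * Jf y ≠ 0 := mul_ne_zero (hadef ▸ Complex.exp_ne_zero _) hJy
    have hsl : a * Jf y ∈ Complex.slitPlane := by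
      rw [Complex.mem_slitPlane_iff_arg]
      refine ⟨?_, hAne⟩
      rw [harg]
      intro hcon
      have h2 := (abs_lt.mp hd).2
      rw [hcon] at h2
      exact lt_irrefl _ h2
    exact ⟨hJy, hsl, tf_pos_of_Jf hJy, hd⟩
  -- chart identity on Ω
  have chart : ∀ y ∈ Ω, Kfun N κ z y
      = (c * (a * Jf y) ^ (κ : ℂ) * ((tf z y ^ p : ℝ) : ℂ) * (((1:ℝ)) : ℂ)).im := by
    intro y hy
    obtain ⟨hJy, hsl, hq, hd⟩ := hyfacts y hy
    obtain ⟨harg, habs⟩ := rot_arg_abs hJy hd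
    rw [← hadef] at harg habs
    have hAne : a * Jf y ≠ 0 := mul_ne_zero (hadef ▸ Complex.exp_ne_zero _) hJy
    have h1 : (c * ((a * Jf y) ^ (κ : ℂ))).im
        = ‖Jf y‖ ^ κ * Real.sin (κ * thetaW (Jf y)) := by
      rw [hcdef, im_rot_cpow κ θ₀ hAne, habs, harg,
        show θ₀ + (thetaW (Jf y) - θ₀) = thetaW (Jf y) by ring]
    unfold Kfun
    have hth : theta y.1 y.2.1 = thetaW (Jf y) := thetaW_eq y.1 y.2.1
    rw [hth, ← abs_Jf y, ← hpdef,
      show (y.1 ^ 2 + y.2.1 ^ 2 + ‖y.2.2 - z‖ ^ 2) = tf z y from rfl, ← h1]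
    simp [Complex.mul_im]
  -- the global first derivative of K on Ω
  have hfdgen : ∀ y ∈ Ω, fderiv ℝ (Kfun N κ z) y = Complex.imCLM.comp
      ((c * (κ : ℂ) * a * (a * Jf y) ^ ((κ : ℂ) - 1) * ((tf z y ^ p : ℝ) : ℂ)
          * (((1:ℝ)) : ℂ)) • (JD (N - 2))
        + (c * (a * Jf y) ^ (κ : ℂ) * ((p * tf z y ^ (p - 1) * 1 : ℝ) : ℂ)) •
            (Complex.ofRealCLM.comp (tD z y))
        + (c * (a * Jf y) ^ (κ : ℂ) * ((tf z y ^ p : ℝ) : ℂ)) •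
            (Complex.ofRealCLM.comp (0 : Xsp (N - 2) →L[ℝ] ℝ))) := by
    intro y hy
    obtain ⟨hJy, hsl, hq, hd⟩ := hyfacts y hy
    have hm := master c (κ : ℂ) a p z (fun _ => (1:ℝ)) 0 y hsl hq.ne' (hasFDerivAt_const (1:ℝ) y)
    refine HasFDerivAt.fderiv ?_
    refine (Complex.imCLM.hasFDerivAt.comp y hm).congr_of_eventuallyEq ?_
    filter_upwards [hΩo.mem_nhds hy] with v hv
    exact chart v hv
  -- directional values of the first derivative on Ω
  have hfdval : ∀ y ∈ Ω, ∀ v : Xsp (N - 2), fderiv ℝ (Kfun N κ z) y v =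
      ((c * (κ : ℂ) * a * (a * Jf y) ^ ((κ : ℂ) - 1) * ((tf z y ^ p : ℝ) : ℂ))
          * ((v.1 : ℝ) + (v.2.1 : ℝ) * I)
        + (c * (a * Jf y) ^ (κ : ℂ) * ((p * tf z y ^ (p - 1) : ℝ) : ℂ))
          * ((2 * y.1 * v.1 + 2 * y.2.1 * v.2.1 + 2 * inner ℝ (y.2.2 - z) v.2.2 : ℝ) : ℂ)).im := by
    intro y hy v
    rw [hfdgen y hy]
    simp only [ContinuousLinearMap.coe_comp', Function.comp_apply,
      ContinuousLinearMap.add_apply, ContinuousLinearMap.coe_smul', Pi.smul_apply,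
      JD_apply, tD_apply, ContinuousLinearMap.zero_apply, Complex.ofRealCLM_apply,
      Complex.imCLM_apply, smul_eq_mul]
    congr 1
    push_cast
    ring
  -- facts at x
  obtain ⟨hJx, hslx, hqx, hdx⟩ := hyfacts x hxΩ
  have hAnex : a * Jf x ≠ 0 := mul_ne_zero (hadef ▸ Complex.exp_ne_zero _) hJx
  -- first direction
  have hfd1 : ∀ y ∈ Ω, fderiv ℝ (Kfun N κ z) y ((1:ℝ), (0:ℝ), (0:EuclideanSpace ℝ (Fin (N-2)))) =
      (c * (κ : ℂ) * a * (a * Jf y) ^ ((κ : ℂ) - 1) * ((tf z y ^ p : ℝ) : ℂ) * (((1:ℝ)) : ℂ)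
        + 2 * (p : ℂ) * c * (a * Jf y) ^ (κ : ℂ) * ((tf z y ^ (p - 1) : ℝ) : ℂ)
          * ((y.1 : ℝ) : ℂ)).im := by
    intro y hy
    rw [hfdval y hy]
    congr 1
    simp only [inner_zero_right]
    push_cast
    ring
  have hfd2 : ∀ y ∈ Ω, fderiv ℝ (Kfun N κ z) y ((0:ℝ), (1:ℝ), (0:EuclideanSpace ℝ (Fin (N-2)))) =
      (c * (κ : ℂ) * a * I * (a * Jf y) ^ ((κ : ℂ) - 1) * ((tf z y ^ p : ℝ) : ℂ) * (((1:ℝ)) : ℂ)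
        + 2 * (p : ℂ) * c * (a * Jf y) ^ (κ : ℂ) * ((tf z y ^ (p - 1) : ℝ) : ℂ)
          * ((y.2.1 : ℝ) : ℂ)).im := by
    intro y hy
    rw [hfdval y hy]
    congr 1
    simp only [inner_zero_right]
    push_cast
    ring
  have hfdE : ∀ i : Fin (N - 2), ∀ y ∈ Ω, fderiv ℝ (Kfun N κ z) y
      ((0:ℝ), (0:ℝ), EuclideanSpace.single i (1:ℝ)) =
      (2 * (p : ℂ) * c * (a * Jf y) ^ (κ : ℂ) * ((tf z y ^ (p - 1) : ℝ) : ℂ)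
          * ((inner ℝ (y.2.2 - z) (EuclideanSpace.single i (1:ℝ)) : ℝ) : ℂ)).im := by
    intro i y hy
    rw [hfdval y hy]
    congr 1
    push_cast
    ring
  -- outer derivatives
  have hev1 : (fun y => fderiv ℝ (Kfun N κ z) y ((1:ℝ), (0:ℝ), (0:EuclideanSpace ℝ (Fin (N-2)))))
      =ᶠ[nhds x] fun y =>
      (c * (κ : ℂ) * a * (a * Jf y) ^ ((κ : ℂ) - 1) * ((tf z y ^ p : ℝ) : ℂ) * (((1:ℝ)) : ℂ)
        + 2 * (p : ℂ) * c * (a * Jf y) ^ (κ : ℂ) * ((tf z y ^ (p - 1) : ℝ) : ℂ)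
          * ((y.1 : ℝ) : ℂ)).im := by
    filter_upwards [hΩo.mem_nhds hxΩ] with v hv
    exact hfd1 v hv
  have hev2 : (fun y => fderiv ℝ (Kfun N κ z) y ((0:ℝ), (1:ℝ), (0:EuclideanSpace ℝ (Fin (N-2)))))
      =ᶠ[nhds x] fun y =>
      (c * (κ : ℂ) * a * I * (a * Jf y) ^ ((κ : ℂ) - 1) * ((tf z y ^ p : ℝ) : ℂ) * (((1:ℝ)) : ℂ)
        + 2 * (p : ℂ) * c * (a * Jf y) ^ (κ : ℂ) * ((tf z y ^ (p - 1) : ℝ) : ℂ)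
          * ((y.2.1 : ℝ) : ℂ)).im := by
    filter_upwards [hΩo.mem_nhds hxΩ] with v hv
    exact hfd2 v hv
  have hevE : ∀ i : Fin (N - 2),
      (fun y => fderiv ℝ (Kfun N κ z) y ((0:ℝ), (0:ℝ), EuclideanSpace.single i (1:ℝ)))
      =ᶠ[nhds x] fun y =>
      (2 * (p : ℂ) * c * (a * Jf y) ^ (κ : ℂ) * ((tf z y ^ (p - 1) : ℝ) : ℂ)
          * ((inner ℝ (y.2.2 - z) (EuclideanSpace.single i (1:ℝ)) : ℝ) : ℂ)).im := by
    intro i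
    filter_upwards [hΩo.mem_nhds hxΩ] with v hv
    exact hfdE i v hv
  -- second derivatives via master
  have hm11 := master (c * (κ : ℂ) * a) ((κ : ℂ) - 1) a p z (fun _ => (1:ℝ))
    (0 : Xsp (N - 2) →L[ℝ] ℝ) x hslx hqx.ne' (hasFDerivAt_const (1:ℝ) x)
  have hm12 := master (2 * (p : ℂ) * c) (κ : ℂ) a (p - 1) z (fun v : Xsp (N - 2) => v.1)
    (ContinuousLinearMap.fst ℝ ℝ _) x hslx hqx.ne' hasFDerivAt_fst
  have hm21 := master (c * (κ : ℂ) * a * I) ((κ : ℂ) - 1) a p z (fun _ => (1:ℝ))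
    (0 : Xsp (N - 2) →L[ℝ] ℝ) x hslx hqx.ne' (hasFDerivAt_const (1:ℝ) x)
  have hm22 := master (2 * (p : ℂ) * c) (κ : ℂ) a (p - 1) z (fun v : Xsp (N - 2) => v.2.1)
    ((ContinuousLinearMap.fst ℝ ℝ (EuclideanSpace ℝ (Fin (N - 2)))).comp
      (ContinuousLinearMap.snd ℝ ℝ (ℝ × EuclideanSpace ℝ (Fin (N - 2))))) x hslx hqx.ne'
    ((hasFDerivAt_fst (p := x.2)).comp x (hasFDerivAt_snd (p := x)))
  have hmE := fun i : Fin (N - 2) => master (2 * (p : ℂ) * c) (κ : ℂ) a (p - 1) z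
    (fun v : Xsp (N - 2) => (inner ℝ (v.2.2 - z) (EuclideanSpace.single i (1:ℝ)) : ℝ))
    ((innerSL ℝ (EuclideanSpace.single i (1:ℝ))).comp
        ((ContinuousLinearMap.snd ℝ ℝ (EuclideanSpace ℝ (Fin (N - 2)))).comp
          (ContinuousLinearMap.snd ℝ ℝ (ℝ × EuclideanSpace ℝ (Fin (N - 2)))))) x hslx hqx.ne'
    (hasFDerivAt_elli z i x)
  have H1 : HasFDerivAt (fun y : Xsp (N - 2) =>
      (c * (κ : ℂ) * a * (a * Jf y) ^ ((κ : ℂ) - 1) * ((tf z y ^ p : ℝ) : ℂ) * (((1:ℝ)) : ℂ)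
        + 2 * (p : ℂ) * c * (a * Jf y) ^ (κ : ℂ) * ((tf z y ^ (p - 1) : ℝ) : ℂ)
          * ((y.1 : ℝ) : ℂ)).im) _ x := Complex.imCLM.hasFDerivAt.comp x (hm11.add hm12)
  have H2 : HasFDerivAt (fun y : Xsp (N - 2) =>
      (c * (κ : ℂ) * a * I * (a * Jf y) ^ ((κ : ℂ) - 1) * ((tf z y ^ p : ℝ) : ℂ) * (((1:ℝ)) : ℂ)
        + 2 * (p : ℂ) * c * (a * Jf y) ^ (κ : ℂ) * ((tf z y ^ (p - 1) : ℝ) : ℂ)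
          * ((y.2.1 : ℝ) : ℂ)).im) _ x := Complex.imCLM.hasFDerivAt.comp x (hm21.add hm22)
  have HE : ∀ i : Fin (N - 2), HasFDerivAt (fun y : Xsp (N - 2) =>
      (2 * (p : ℂ) * c * (a * Jf y) ^ (κ : ℂ) * ((tf z y ^ (p - 1) : ℝ) : ℂ)
          * ((inner ℝ (y.2.2 - z) (EuclideanSpace.single i (1:ℝ)) : ℝ) : ℂ)).im) _ x :=
    fun i => Complex.imCLM.hasFDerivAt.comp x (hmE i)
  -- evaluate outer derivatives
  have e1 : fderiv ℝ (fun y => fderiv ℝ (Kfun N κ z) y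
        ((1:ℝ), (0:ℝ), (0:EuclideanSpace ℝ (Fin (N-2))))) x
        ((1:ℝ), (0:ℝ), (0:EuclideanSpace ℝ (Fin (N-2)))) =
      (c * (κ : ℂ) * a * ((κ : ℂ) - 1) * a * (a * Jf x) ^ ((κ : ℂ) - 2)
          * ((tf z x ^ p : ℝ) : ℂ)
        + 4 * (p : ℂ) * (κ : ℂ) * a * c * (a * Jf x) ^ ((κ : ℂ) - 1)
          * ((tf z x ^ (p - 1) : ℝ) : ℂ) * ((x.1 : ℝ) : ℂ)
        + 4 * (p : ℂ) * ((p : ℂ) - 1) * c * (a * Jf x) ^ (κ : ℂ)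
          * ((tf z x ^ (p - 2) : ℝ) : ℂ) * ((x.1 : ℝ) : ℂ) ^ 2
        + 2 * (p : ℂ) * c * (a * Jf x) ^ (κ : ℂ) * ((tf z x ^ (p - 1) : ℝ) : ℂ)).im := by
    rw [hev1.fderiv_eq, H1.fderiv]
    simp only [ContinuousLinearMap.coe_comp', Function.comp_apply,
      ContinuousLinearMap.add_apply, ContinuousLinearMap.coe_smul', Pi.smul_apply,
      JD_apply, tD_apply, ContinuousLinearMap.zero_apply, Complex.ofRealCLM_apply,
      Complex.imCLM_apply, smul_eq_mul, ContinuousLinearMap.coe_fst', inner_zero_right]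
    congr 1
    rw [show (κ : ℂ) - 1 - 1 = (κ : ℂ) - 2 from by ring,
      show p - 1 - 1 = p - 2 from by ring]
    push_cast
    ring
  have e2 : fderiv ℝ (fun y => fderiv ℝ (Kfun N κ z) y
        ((0:ℝ), (1:ℝ), (0:EuclideanSpace ℝ (Fin (N-2))))) x
        ((0:ℝ), (1:ℝ), (0:EuclideanSpace ℝ (Fin (N-2)))) =
      (-(c * (κ : ℂ) * a * ((κ : ℂ) - 1) * a * (a * Jf x) ^ ((κ : ℂ) - 2)
          * ((tf z x ^ p : ℝ) : ℂ))
        + 4 * (p : ℂ) * (κ : ℂ) * a * c * (a * Jf x) ^ ((κ : ℂ) - 1)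
          * ((tf z x ^ (p - 1) : ℝ) : ℂ) * ((x.2.1 : ℝ) : ℂ) * I
        + 4 * (p : ℂ) * ((p : ℂ) - 1) * c * (a * Jf x) ^ (κ : ℂ)
          * ((tf z x ^ (p - 2) : ℝ) : ℂ) * ((x.2.1 : ℝ) : ℂ) ^ 2
        + 2 * (p : ℂ) * c * (a * Jf x) ^ (κ : ℂ) * ((tf z x ^ (p - 1) : ℝ) : ℂ)).im := by
    rw [hev2.fderiv_eq, H2.fderiv]
    simp only [ContinuousLinearMap.coe_comp', Function.comp_apply,
      ContinuousLinearMap.add_apply, ContinuousLinearMap.coe_smul', Pi.smul_apply,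
      JD_apply, tD_apply, ContinuousLinearMap.zero_apply, Complex.ofRealCLM_apply,
      Complex.imCLM_apply, smul_eq_mul, ContinuousLinearMap.coe_fst', inner_zero_right]
    congr 1
    rw [show (κ : ℂ) - 1 - 1 = (κ : ℂ) - 2 from by ring,
      show p - 1 - 1 = p - 2 from by ring]
    push_cast
    linear_combination (c * (κ : ℂ) * a * ((κ : ℂ) - 1) * a * (a * Jf x) ^ ((κ : ℂ) - 2)
      * ((tf z x ^ p : ℝ) : ℂ)) * Complex.I_sq
  have e3 : ∀ i : Fin (N - 2), fderiv ℝ (fun y => fderiv ℝ (Kfun N κ z) y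
        ((0:ℝ), (0:ℝ), EuclideanSpace.single i (1:ℝ))) x
        ((0:ℝ), (0:ℝ), EuclideanSpace.single i (1:ℝ)) =
      (4 * (p : ℂ) * ((p : ℂ) - 1) * c * (a * Jf x) ^ (κ : ℂ)
          * ((tf z x ^ (p - 2) : ℝ) : ℂ) * (((x.2.2 - z) i : ℝ) : ℂ) ^ 2
        + 2 * (p : ℂ) * c * (a * Jf x) ^ (κ : ℂ) * ((tf z x ^ (p - 1) : ℝ) : ℂ)).im := by
    intro i
    rw [(hevE i).fderiv_eq, (HE i).fderiv]
    simp only [ContinuousLinearMap.coe_comp', Function.comp_apply,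
      ContinuousLinearMap.add_apply, ContinuousLinearMap.coe_smul', Pi.smul_apply,
      JD_apply, tD_apply, ContinuousLinearMap.zero_apply, Complex.ofRealCLM_apply,
      Complex.imCLM_apply, smul_eq_mul, innerSL_apply_apply,
      EuclideanSpace.inner_single_right, EuclideanSpace.inner_single_left,
      EuclideanSpace.single_apply, inner_zero_right]
    congr 1
    rw [show p - 1 - 1 = p - 2 from by ring]
    push_cast
    simp only [starRingEnd_apply, star_trivial, EuclideanSpace.single_apply, if_pos rfl,
      Complex.ofReal_zero, mul_zero, zero_mul, add_zero, zero_add,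
      Complex.ofReal_one, mul_one, one_mul, if_true]
    ring
  -- assemble
  unfold lapX
  rw [e1, e2, Finset.sum_congr rfl (fun i _ => e3 i), ← Complex.im_sum,
    ← Complex.add_im, ← Complex.add_im]
  have hsum2 : (∑ i : Fin (N - 2),
      (4 * (p : ℂ) * ((p : ℂ) - 1) * c * (a * Jf x) ^ (κ : ℂ)
          * ((tf z x ^ (p - 2) : ℝ) : ℂ) * (((x.2.2 - z) i : ℝ) : ℂ) ^ 2
        + 2 * (p : ℂ) * c * (a * Jf x) ^ (κ : ℂ) * ((tf z x ^ (p - 1) : ℝ) : ℂ))) =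
      4 * (p : ℂ) * ((p : ℂ) - 1) * c * (a * Jf x) ^ (κ : ℂ)
          * ((tf z x ^ (p - 2) : ℝ) : ℂ) * ((‖x.2.2 - z‖ ^ 2 : ℝ) : ℂ)
        + ((N : ℂ) - 2) * (2 * (p : ℂ) * c * (a * Jf x) ^ (κ : ℂ)
          * ((tf z x ^ (p - 1) : ℝ) : ℂ)) := by
    rw [Finset.sum_add_distrib, ← Finset.mul_sum, Finset.sum_const, Finset.card_univ,
      Fintype.card_fin, nsmul_eq_mul]
    have hcast : (∑ i : Fin (N - 2), (((x.2.2 - z) i : ℝ) : ℂ) ^ 2)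
        = ((‖x.2.2 - z‖ ^ 2 : ℝ) : ℂ) := by
      rw [← helper_norm_sq (x.2.2 - z)]
      norm_cast
    rw [hcast, show ((N - 2 : ℕ) : ℂ) = (N : ℂ) - 2 from by
      rw [Nat.cast_sub (by omega)]; norm_num]
  rw [hsum2]
  have hAx : (a * Jf x) ^ (κ : ℂ) = (a * Jf x) ^ ((κ : ℂ) - 1) * (a * Jf x) := by
    conv_lhs => rw [show (κ : ℂ) = ((κ : ℂ) - 1) + 1 from by ring]
    rw [Complex.cpow_add _ _ hAnex, Complex.cpow_one]
  have hQ1 : tf z x ^ (p - 1) = tf z x ^ (p - 2) * tf z x := by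
    conv_lhs => rw [show p - 1 = (p - 2) + 1 from by ring]
    rw [Real.rpow_add hqx, Real.rpow_one]
  have hQp : tf z x ^ p = tf z x ^ (p - 2) * tf z x * tf z x := by
    conv_lhs => rw [show p = (p - 2) + 1 + 1 from by ring]
    rw [Real.rpow_add hqx, Real.rpow_add hqx, Real.rpow_one]
  have hzero : (c * (κ : ℂ) * a * ((κ : ℂ) - 1) * a * (a * Jf x) ^ ((κ : ℂ) - 2)
          * ((tf z x ^ p : ℝ) : ℂ)
        + 4 * (p : ℂ) * (κ : ℂ) * a * c * (a * Jf x) ^ ((κ : ℂ) - 1)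
          * ((tf z x ^ (p - 1) : ℝ) : ℂ) * ((x.1 : ℝ) : ℂ)
        + 4 * (p : ℂ) * ((p : ℂ) - 1) * c * (a * Jf x) ^ (κ : ℂ)
          * ((tf z x ^ (p - 2) : ℝ) : ℂ) * ((x.1 : ℝ) : ℂ) ^ 2
        + 2 * (p : ℂ) * c * (a * Jf x) ^ (κ : ℂ) * ((tf z x ^ (p - 1) : ℝ) : ℂ))
      + (-(c * (κ : ℂ) * a * ((κ : ℂ) - 1) * a * (a * Jf x) ^ ((κ : ℂ) - 2)
          * ((tf z x ^ p : ℝ) : ℂ))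
        + 4 * (p : ℂ) * (κ : ℂ) * a * c * (a * Jf x) ^ ((κ : ℂ) - 1)
          * ((tf z x ^ (p - 1) : ℝ) : ℂ) * ((x.2.1 : ℝ) : ℂ) * I
        + 4 * (p : ℂ) * ((p : ℂ) - 1) * c * (a * Jf x) ^ (κ : ℂ)
          * ((tf z x ^ (p - 2) : ℝ) : ℂ) * ((x.2.1 : ℝ) : ℂ) ^ 2
        + 2 * (p : ℂ) * c * (a * Jf x) ^ (κ : ℂ) * ((tf z x ^ (p - 1) : ℝ) : ℂ))
      + (4 * (p : ℂ) * ((p : ℂ) - 1) * c * (a * Jf x) ^ (κ : ℂ)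
          * ((tf z x ^ (p - 2) : ℝ) : ℂ) * ((‖x.2.2 - z‖ ^ 2 : ℝ) : ℂ)
        + ((N : ℂ) - 2) * (2 * (p : ℂ) * c * (a * Jf x) ^ (κ : ℂ)
          * ((tf z x ^ (p - 1) : ℝ) : ℂ))) = 0 := by
    rw [hAx, hQ1, hQp,
      show Jf x = (x.1 : ℂ) + (x.2.1 : ℂ) * I from rfl,
      show tf z x = x.1 ^ 2 + x.2.1 ^ 2 + ‖x.2.2 - z‖ ^ 2 from rfl, hpdef]
    push_cast
    ring
  rw [hzero, Complex.zero_im]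

end Harmonic

/-- Explicit form (6.19) of the Martin kernel of a 2-dihedron with pole at the edge point
`z` (Section 6.2 with `k = 2`, `κ₊ = π/α`): `K` is positive and harmonic in `D_α` and
extends continuously by `0` to `∂D_α ∖ {(0,0,z)}`. -/
theorem statement17 (N : ℕ) (hN : 3 ≤ N) (α : ℝ) (hα0 : 0 < α)
    (hα2 : α < 2 * Real.pi) (z : EuclideanSpace ℝ (Fin (N - 2))) :
    (∀ x ∈ Dset N α, 0 < Kfun N (Real.pi / α) z x) ∧
    (∀ x ∈ Dset N α, lapX N (Kfun N (Real.pi / α) z) x = 0) ∧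
    ∀ x ∈ frontier (Dset N α), x ≠ ((0 : ℝ), (0 : ℝ), z) →
      Tendsto (Kfun N (Real.pi / α) z) (nhdsWithin x (Dset N α)) (nhds 0) := by
  have hπ : 0 < Real.pi := Real.pi_pos
  set κ : ℝ := Real.pi / α with hκdef
  have hκ0 : 0 < κ := div_pos hπ hα0
  have hκα : κ * α = Real.pi := div_mul_cancel₀ Real.pi hα0.ne'
  refine ⟨?_, ?_, ?_⟩
  · -- positivity
    rintro x hx
    obtain ⟨hJ, hθ0, hθα⟩ := mem_Dset_iff.mp hx
    have h1 : 0 < Real.sqrt (x.1 ^ 2 + x.2.1 ^ 2) :=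
      Real.sqrt_pos.mpr (sq_add_sq_pos_of_Jf hJ)
    have hsin : 0 < Real.sin (κ * theta x.1 x.2.1) := by
      apply Real.sin_pos_of_pos_of_lt_pi
      · rw [thetaW_eq x.1 x.2.1]; positivity
      · rw [← hκα, thetaW_eq x.1 x.2.1]
        exact (mul_lt_mul_iff_right₀ hκ0).mpr hθα
    have ht : 0 < x.1 ^ 2 + x.2.1 ^ 2 + ‖x.2.2 - z‖ ^ 2 := tf_pos_of_Jf hJ
    unfold Kfun
    have := Real.rpow_pos_of_pos ht (-((N : ℝ) - 2 + 2 * κ) / 2)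
    positivity
  · -- harmonicity
    intro x hx
    exact harmonicity N hN hα2 z x hx
  · -- boundary behaviour
    intro x hx hxz
    set p : ℝ := -((N : ℝ) - 2 + 2 * κ) / 2 with hpdef
    have hDopen := isOpen_Dset N hα2
    have hcl : x ∈ closure (Dset N α) := hx.1
    have hnot : x ∉ Dset N α := by
      intro h; exact (hDopen.frontier_eq ▸ hx).2 h
    -- t is positive at x
    have htx : 0 < tf z x := by
      by_contra h0
      push_neg at h0
      unfold tf at h0
      have h1 : x.1 ^ 2 = 0 ∧ x.2.1 ^ 2 = 0 ∧ ‖x.2.2 - z‖ ^ 2 = 0 := by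
        refine ⟨?_, ?_, ?_⟩ <;>
          nlinarith [sq_nonneg x.1, sq_nonneg x.2.1, sq_nonneg ‖x.2.2 - z‖]
      apply hxz
      have hz : x.2.2 = z := by
        have := h1.2.2
        rw [pow_eq_zero_iff (by norm_num), norm_eq_zero, sub_eq_zero] at this
        exact this
      have hx1 : x.1 = 0 := by nlinarith [h1.1]
      have hx2 : x.2.1 = 0 := by nlinarith [h1.2.1]
      exact Prod.ext hx1 (Prod.ext hx2 hz)
    -- Third factor tends to a finite limit
    have T3 : Tendsto (fun y : Xsp (N - 2) => tf z y ^ p) (nhdsWithin x (Dset N α))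
        (nhds ((tf z x) ^ p)) := by
      have : ContinuousAt (fun y : Xsp (N - 2) => tf z y ^ p) x := by
        exact ((continuous_tf z).continuousAt).rpow_const (Or.inl htx.ne')
      exact this.continuousWithinAt.tendsto
    -- First two factors tend to 0
    have T12 : Tendsto (fun y : Xsp (N - 2) =>
        Real.sqrt (y.1 ^ 2 + y.2.1 ^ 2) ^ κ * Real.sin (κ * theta y.1 y.2.1))
        (nhdsWithin x (Dset N α)) (nhds 0) := by
      by_cases hw0 : Jf x = 0
      · -- edge case: ρ → 0
        refine squeeze_zero_norm
          (a := fun y : Xsp (N - 2) => Real.sqrt (y.1 ^ 2 + y.2.1 ^ 2) ^ κ)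
          (fun y => ?_) ?_
        · rw [norm_mul, Real.norm_eq_abs, Real.norm_eq_abs,
            abs_of_nonneg (by positivity : (0:ℝ) ≤ Real.sqrt (y.1 ^ 2 + y.2.1 ^ 2) ^ κ)]
          have hs : |Real.sin (κ * theta y.1 y.2.1)| ≤ 1 := abs_le.mpr
            ⟨Real.neg_one_le_sin _, Real.sin_le_one _⟩
          nlinarith [Real.rpow_nonneg (Real.sqrt_nonneg (y.1 ^ 2 + y.2.1 ^ 2)) κ]
        · have h1 : Tendsto (fun y : Xsp (N - 2) => Real.sqrt (y.1 ^ 2 + y.2.1 ^ 2))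
              (nhdsWithin x (Dset N α)) (nhds 0) := by
            have hc : ContinuousAt (fun y : Xsp (N - 2) => Real.sqrt (y.1 ^ 2 + y.2.1 ^ 2)) x := by
              fun_prop
            have : Real.sqrt (x.1 ^ 2 + x.2.1 ^ 2) = 0 := by
              obtain ⟨h1, h2⟩ := (Jf_eq_zero_iff x).mp hw0
              rw [h1, h2]; simp
            rw [← this]
            exact hc.continuousWithinAt.tendsto
          have h2 : ContinuousAt (fun s : ℝ => s ^ κ) 0 :=
            Real.continuousAt_rpow_const _ _ (Or.inr hκ0.le)
          have := h2.tendsto.comp h1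
          rwa [Real.zero_rpow hκ0.ne'] at this
      · -- boundary face case
        have Tρ : Tendsto (fun y : Xsp (N - 2) => Real.sqrt (y.1 ^ 2 + y.2.1 ^ 2) ^ κ)
            (nhdsWithin x (Dset N α)) (nhds (Real.sqrt (x.1 ^ 2 + x.2.1 ^ 2) ^ κ)) := by
          have hb : 0 < Real.sqrt (x.1 ^ 2 + x.2.1 ^ 2) :=
            Real.sqrt_pos.mpr (sq_add_sq_pos_of_Jf hw0)
          have : ContinuousAt (fun y : Xsp (N - 2) =>
              Real.sqrt (y.1 ^ 2 + y.2.1 ^ 2) ^ κ) x := by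
            exact ContinuousAt.rpow_const (by fun_prop) (Or.inl hb.ne')
          exact this.continuousWithinAt.tendsto
        have Tsin : Tendsto (fun y : Xsp (N - 2) => Real.sin (κ * theta y.1 y.2.1))
            (nhdsWithin x (Dset N α)) (nhds 0) := by
          have hθfun : ∀ y : Xsp (N - 2), theta y.1 y.2.1 = thetaW (Jf y) := by
            intro y; exact thetaW_eq y.1 y.2.1
          by_cases hW : (Jf x).re < 0 ∨ (Jf x).im ≠ 0
          · -- θ continuous at x; limit must be α
            have hθc : Tendsto (fun y : Xsp (N - 2) => thetaW (Jf y))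
                (nhdsWithin x (Dset N α)) (nhds (thetaW (Jf x))) :=
              ((continuousAt_thetaW hW).comp continuous_Jf.continuousAt
                ).continuousWithinAt.tendsto
            have hne : (nhdsWithin x (Dset N α)).NeBot :=
              mem_closure_iff_nhdsWithin_neBot.mp hcl
            have hle : thetaW (Jf x) ≤ α := by
              apply le_of_tendsto hθc
              filter_upwards [self_mem_nhdsWithin] with y hy
              exact ((mem_Dset_iff.mp hy).2.2).le
            have hθx0 : 0 < thetaW (Jf x) := thetaW_pos_of_Wset hW
            have hθxα : thetaW (Jf x) = α := by
              rcases hle.lt_or_eq with h | h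
              · exfalso
                exact hnot (mem_Dset_iff.mpr ⟨hw0, hθx0, h⟩)
              · exact h
            have : Tendsto (fun y : Xsp (N - 2) => Real.sin (κ * thetaW (Jf y)))
                (nhdsWithin x (Dset N α)) (nhds (Real.sin (κ * thetaW (Jf x)))) := by
              exact ((Real.continuous_sin.continuousAt).comp
                ((continuous_const.mul continuous_id).continuousAt)).tendsto.comp hθc
            rw [hθxα, hκα, Real.sin_pi] at this
            simpa only [hθfun] using this
          · -- x on the positive real axis: θ → 0
            push_neg at hW
            have hre : 0 < (Jf x).re := by
              rcases (lt_or_eq_of_le hW.1) with h | h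
              · exact h
              · exfalso
                apply hw0
                exact Complex.ext h.symm hW.2
            have harg : Tendsto (fun y : Xsp (N - 2) => Complex.arg (Jf y))
                (nhds x) (nhds 0) := by
              have h0 : Complex.arg (Jf x) = 0 :=
                Complex.arg_eq_zero_iff.mpr ⟨hW.1, hW.2⟩
              rw [← h0]
              exact (Complex.continuousAt_arg (Or.inl hre)).tendsto.comp
                continuous_Jf.continuousAt
            have hargW : Tendsto (fun y : Xsp (N - 2) => Complex.arg (Jf y))
                (nhdsWithin x (Dset N α)) (nhds 0) := harg.mono_left nhdsWithin_le_nhds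
            have hev : (fun y : Xsp (N - 2) => thetaW (Jf y))
                =ᶠ[nhdsWithin x (Dset N α)] (fun y => Complex.arg (Jf y)) := by
              have hgap : 0 < 2 * Real.pi - α := by linarith
              filter_upwards [hargW.eventually (eventually_abs_sub_lt 0 hgap),
                self_mem_nhdsWithin] with y hy hyD
              rw [thetaW_def]
              split_ifs with hneg
              · exfalso
                have hθα : thetaW (Jf y) < α := (mem_Dset_iff.mp hyD).2.2
                rw [thetaW_def, if_pos hneg] at hθα
                rw [sub_zero] at hy
                have := abs_lt.mp hy
                linarith [this.1]
              · rfl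
            have hθ0 : Tendsto (fun y : Xsp (N - 2) => thetaW (Jf y))
                (nhdsWithin x (Dset N α)) (nhds 0) := hargW.congr' hev.symm
            have : Tendsto (fun y : Xsp (N - 2) => Real.sin (κ * thetaW (Jf y)))
                (nhdsWithin x (Dset N α)) (nhds (Real.sin (κ * 0))) := by
              exact (Real.continuous_sin.tendsto _).comp ((tendsto_const_nhds.mul hθ0).congr
                (fun y => rfl))
            rw [mul_zero, Real.sin_zero] at this
            simpa only [hθfun] using this
        have := Tρ.mul Tsin
        rwa [mul_zero] at this
    have := T12.mul T3
    rw [zero_mul] at this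
    unfold Kfun
    exact this
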